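/- Let q be odd, A = (ZMod q)ⁿ with the permutation Σₙ-action, and fₛ = eₛ + e_{s+1} for s = 1,…,n-1. Then aₛ := -(2⁻¹)·fₛ (with 2⁻¹ taken modulo q) solves the system Jₛ(aₛ) = -fₛ for all s and I_{r,r+1}(aᵣ - a_{r+1}) = 0 for all r = 1,…,n-2, where Jₛ = ιₛ + 1 and I_{r,r+1} = ιᵣι_{r+1}ιᵣ + ιᵣ + ι_{r+1}. -/

import Mathlib

/-- The action of the transposition `(i, j)` on `(ZMod q)ⁿ` by permuting coordinates. -/
def swapAct (q n : ℕ) (i j : Fin n) (a : Fin n → ZMod q) : Fin n → ZMod q :=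
  a ∘ (Equiv.swap i j)

/-- Standard basis vector of `(ZMod q)ⁿ`. -/
def eVec (q n : ℕ) (i : Fin n) : Fin n → ZMod q := Pi.single i 1

/-- `fₛ = eₛ + e_{s+1}` in `(ZMod q)ⁿ`. -/
def fVec (q n : ℕ) (s : ℕ) (hs : s + 1 < n) : Fin n → ZMod q :=
  eVec q n ⟨s, Nat.lt_of_succ_lt hs⟩ + eVec q n ⟨s + 1, hs⟩

/-- `Jₛ = ιₛ + 1` on `(ZMod q)ⁿ`, `ιₛ` the coordinate transposition `(s, s+1)`. -/
def Jop (q n : ℕ) (s : ℕ) (hs : s + 1 < n) (a : Fin n → ZMod q) : Fin n → ZMod q :=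
  swapAct q n ⟨s, Nat.lt_of_succ_lt hs⟩ ⟨s + 1, hs⟩ a + a

/-- The endomorphism `I_{r,r+1} = ιᵣι_{r+1}ιᵣ + ιᵣ + ι_{r+1}` of `(ZMod q)ⁿ`. -/
def Iop (q n : ℕ) (r : ℕ) (hr : r + 2 < n) (a : Fin n → ZMod q) : Fin n → ZMod q :=
  let i : Fin n := ⟨r, Nat.lt_of_succ_lt (Nat.lt_of_succ_lt hr)⟩
  let j : Fin n := ⟨r + 1, Nat.lt_of_succ_lt hr⟩
  let k : Fin n := ⟨r + 2, hr⟩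
  swapAct q n i j (swapAct q n j k (swapAct q n i j a))
    + swapAct q n i j a + swapAct q n j k a

/-- The candidate solution `aₛ = -(2⁻¹)·fₛ` for odd `q`. -/
def aSol (q n : ℕ) (s : ℕ) (hs : s + 1 < n) : Fin n → ZMod q :=
  -((2⁻¹ : ZMod q) • fVec q n s hs)

/--AUX-/
lemma swapAct_add (q n : ℕ) (i j : Fin n) (x y : Fin n → ZMod q) :
    swapAct q n i j (x + y) = swapAct q n i j x + swapAct q n i j y := rfl

lemma swapAct_sub (q n : ℕ) (i j : Fin n) (x y : Fin n → ZMod q) :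
    swapAct q n i j (x - y) = swapAct q n i j x - swapAct q n i j y := rfl

lemma swapAct_neg (q n : ℕ) (i j : Fin n) (x : Fin n → ZMod q) :
    swapAct q n i j (-x) = -swapAct q n i j x := rfl

lemma swapAct_smul (q n : ℕ) (i j : Fin n) (c : ZMod q) (x : Fin n → ZMod q) :
    swapAct q n i j (c • x) = c • swapAct q n i j x := rfl

lemma swapAct_single (q n : ℕ) (i j k : Fin n) (c : ZMod q) :
    swapAct q n i j (Pi.single k c) = Pi.single (Equiv.swap i j k) c := by
  funext x
  simp only [swapAct, Function.comp_apply, Pi.single_apply]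
  congr 1
  simp only [eq_iff_iff]
  constructor
  · intro h; rw [← h, Equiv.swap_apply_self]
  · intro h; rw [h, Equiv.swap_apply_self]

/-- For odd `q`, the elements `aₛ = -(2⁻¹)·fₛ` solve the system
`Jₛ(aₛ) = -fₛ` (s = 1,…,n-1) and `I_{r,r+1}(aᵣ - a_{r+1}) = 0` (r = 1,…,n-2). -/
theorem stmt8 (q n : ℕ) (hq : 0 < q) (hodd : Odd q) :
    (∀ s (hs : s + 1 < n), Jop q n s hs (aSol q n s hs) = -(fVec q n s hs)) ∧
    (∀ r (hr : r + 2 < n),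
      Iop q n r hr
        (aSol q n r (Nat.lt_of_succ_lt hr) - aSol q n (r + 1) hr) = 0) := by
  haveI : NeZero q := ⟨hq.ne'⟩
  have hu : IsUnit (2 : ZMod q) := by
    have h := (ZMod.isUnit_iff_coprime 2 q).mpr (hodd.coprime_two_left)
    simpa using h
  have key : ∀ v : Fin n → ZMod q, (2⁻¹ : ZMod q) • v + (2⁻¹ : ZMod q) • v = v := by
    intro v
    rw [← add_smul, ← two_mul, ZMod.mul_inv_of_unit _ hu, one_smul]
  constructor
  · intro s hs
    set i : Fin n := ⟨s, Nat.lt_of_succ_lt hs⟩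
    set j : Fin n := ⟨s + 1, hs⟩
    have hswap : swapAct q n i j (fVec q n s hs) = fVec q n s hs := by
      rw [fVec, eVec, eVec, swapAct_add, swapAct_single, swapAct_single,
        Equiv.swap_apply_left, Equiv.swap_apply_right, add_comm]
    rw [Jop, aSol, swapAct_neg, swapAct_smul, hswap, ← neg_add, key]
  · intro r hr
    set i : Fin n := ⟨r, Nat.lt_of_succ_lt (Nat.lt_of_succ_lt hr)⟩
    set j : Fin n := ⟨r + 1, Nat.lt_of_succ_lt hr⟩
    set k : Fin n := ⟨r + 2, hr⟩
    have hij : i ≠ j := by simp only [i, j, k, ne_eq, Fin.mk.injEq]; omega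
    have hjk : j ≠ k := by simp only [i, j, k, ne_eq, Fin.mk.injEq]; omega
    have hki : k ≠ i := by simp only [i, j, k, ne_eq, Fin.mk.injEq]; omega
    have hv : aSol q n r (Nat.lt_of_succ_lt hr) - aSol q n (r + 1) hr
        = (2⁻¹ : ZMod q) • (Pi.single k (1 : ZMod q) - Pi.single i 1) := by
      simp only [aSol, fVec, eVec]
      module
    rw [Iop, hv]
    change swapAct q n i j (swapAct q n j k (swapAct q n i j _)) + swapAct q n i j _ + swapAct q n j k _ = 0
    simp only [swapAct_smul, swapAct_sub, swapAct_single,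
      Equiv.swap_apply_left, Equiv.swap_apply_right,
      Equiv.swap_apply_of_ne_of_ne hki hjk.symm,
      Equiv.swap_apply_of_ne_of_ne hij hki.symm]
    module
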